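/- (Main theorem.) Let f(X) = a₀ + a₁X + ⋯ + a_tX^t ∈ ℤ[X] be 2-permutational. Then f is transitive mod 2ⁿ for every n ≥ 1 if and only if: (i) a₀ ≡ 1 (mod 2); (ii) 2a₂ ≡ a₃ + a₅ + a₇ + ⋯ (mod 4); (iii) a₂ + a₁ − 1 ≡ a₄ + a₆ + a₈ + ⋯ (mod 4). -/

import Mathlib

open Polynomial

/-- A polynomial `f ∈ ℤ[X]` is `2`-permutational if for every `n ≥ 1` the induced map
`ZMod (2 ^ n) → ZMod (2 ^ n)` is a bijection. -/
def Permutational2 (f : ℤ[X]) : Prop :=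
  ∀ n : ℕ, 1 ≤ n → Function.Bijective (fun x : ZMod (2 ^ n) => aeval x f)

/-- `f` is transitive mod `m`: the induced map on `ZMod m` has a single orbit. -/
def TransitiveMod (f : ℤ[X]) (m : ℕ) : Prop :=
  ∀ x y : ZMod m, ∃ k : ℕ, (fun z : ZMod m => aeval z f)^[k] x = y

/-- The sum of the odd-indexed coefficients `a₃ + a₅ + a₇ + ⋯` of `f`. -/
noncomputable def oddCoeffSum (f : ℤ[X]) : ℤ :=
  ∑ i ∈ (Finset.range (f.natDegree + 1)).filter (fun i => Odd i ∧ 3 ≤ i), f.coeff i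

/-- The sum of the even-indexed coefficients `a₄ + a₆ + a₈ + ⋯` of `f` with index ≥ 4. -/
noncomputable def evenCoeffSumFour (f : ℤ[X]) : ℤ :=
  ∑ i ∈ (Finset.range (f.natDegree + 1)).filter (fun i => Even i ∧ 4 ≤ i), f.coeff i


section Aux
variable (f : ℤ[X])

lemma evalCast (m : ℕ) (k : ℤ) : (aeval ((k : ZMod m)) f) = ((f.eval k : ℤ) : ZMod m) := by
  have h1 : ((k : ZMod m)) = (Int.castRingHom (ZMod m)) k := rfl
  have h2 : (algebraMap ℤ (ZMod m)) = Int.castRingHom (ZMod m) := rfl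
  rw [aeval_def, h2, h1, eval₂_at_apply]
  rfl

lemma iterCast (m : ℕ) (k : ℤ) (j : ℕ) :
    (fun z : ZMod m => aeval z f)^[j] ((k : ZMod m)) = ((f.eval ·)^[j] k : ℤ) := by
  induction j with
  | zero => rfl
  | succ j ih =>
    rw [Function.iterate_succ_apply', Function.iterate_succ_apply', ih]
    exact evalCast f m _

/-- eval preserves congruences -/
lemma modeq_eval {N a b : ℤ} (h : a ≡ b [ZMOD N]) : f.eval a ≡ f.eval b [ZMOD N] := by
  obtain ⟨k, hk⟩ := f.binomExpansion a (b - a)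
  have hba : a + (b - a) = b := by ring
  rw [hba] at hk
  have hd : N ∣ b - a := Int.ModEq.dvd h
  obtain ⟨c, hc⟩ := hd
  rw [hk, hc]
  have : eval a f + eval a (derivative f) * (N * c) + k * (N * c) ^ 2
      = eval a f + N * (eval a (derivative f) * c + k * N * c ^ 2) := by ring
  rw [this]
  exact Int.modEq_iff_dvd.mpr ⟨eval a (derivative f) * c + k * N * c ^ 2, by ring⟩

lemma modeq_iter {N a b : ℤ} (h : a ≡ b [ZMOD N]) (m : ℕ) :
    (f.eval ·)^[m] a ≡ (f.eval ·)^[m] b [ZMOD N] := by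
  induction m with
  | zero => exact h
  | succ m ih => rw [Function.iterate_succ_apply', Function.iterate_succ_apply']
                 exact modeq_eval f ih

end Aux
section Aux
variable (f : ℤ[X])

lemma modeq_prod {N : ℤ} (u v : ℕ → ℤ) (s : Finset ℕ) (h : ∀ i ∈ s, u i ≡ v i [ZMOD N]) :
    (∏ i ∈ s, u i) ≡ (∏ i ∈ s, v i) [ZMOD N] := by
  classical
  induction s using Finset.induction with
  | empty => rfl
  | @insert a s hx ih =>
    rw [Finset.prod_insert hx, Finset.prod_insert hx]
    exact (h a (Finset.mem_insert_self a s)).mul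
      (ih fun i hi => h i (Finset.mem_insert_of_mem hi))

/-- Taylor expansion for iterates -/
lemma taylor_iter (c : ℤ) (m : ℕ) (x t : ℤ) :
    (f.eval ·)^[m] (x + c * t) ≡
      (f.eval ·)^[m] x + c * t * ∏ i ∈ Finset.range m, (derivative f).eval ((f.eval ·)^[i] x)
      [ZMOD c ^ 2] := by
  induction m with
  | zero => simp [Int.ModEq.refl]
  | succ m ih =>
    set P := ∏ i ∈ Finset.range m, (derivative f).eval ((f.eval ·)^[i] x) with hP
    obtain ⟨e, he⟩ := Int.modEq_iff_dvd.mp ih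
    -- (base + c*t*P) - iter = c^2 * e, so iter (x+ct) at m equals base + c*t*P - c^2 e
    have hm : (f.eval ·)^[m] (x + c * t) = (f.eval ·)^[m] x + c * t * P - c ^ 2 * e := by
      omega
    obtain ⟨k, hk⟩ := f.binomExpansion ((f.eval ·)^[m] x) (c * t * P - c ^ 2 * e)
    rw [Function.iterate_succ_apply', Function.iterate_succ_apply', hm]
    have harg : (f.eval ·)^[m] x + c * t * P - c ^ 2 * e
        = (f.eval ·)^[m] x + (c * t * P - c ^ 2 * e) := by ring
    rw [harg, hk, Finset.prod_range_succ]
    set D := eval ((f.eval ·)^[m] x) (derivative f)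
    exact Int.modEq_iff_dvd.mpr ⟨D * e - k * (t * P - c * e) ^ 2, by ring⟩
end Aux
section Aux
variable (f : ℤ[X])

lemma odd_sq_mod8 {x : ℤ} (hx : Odd x) : x ^ 2 ≡ 1 [ZMOD 8] := by
  obtain ⟨m, rfl⟩ := hx
  have h2 : Even (m * (m + 1)) := Int.even_mul_succ_self m
  obtain ⟨j, hj⟩ := h2
  refine Int.modEq_iff_dvd.mpr ⟨-j, by nlinarith⟩

lemma odd_pow_even_mod8 {x : ℤ} (hx : Odd x) {i : ℕ} (hi : Even i) : x ^ i ≡ 1 [ZMOD 8] := by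
  obtain ⟨j, rfl⟩ := hi
  have : x ^ (j + j) = (x ^ 2) ^ j := by ring
  rw [this]
  calc (x ^ 2) ^ j ≡ 1 ^ j [ZMOD 8] := (odd_sq_mod8 hx).pow j
    _ = 1 := one_pow j

lemma odd_pow_odd_mod8 {x : ℤ} (hx : Odd x) {i : ℕ} (hi : Odd i) : x ^ i ≡ x [ZMOD 8] := by
  obtain ⟨j, rfl⟩ := hi
  have : x ^ (2 * j + 1) = (x ^ 2) ^ j * x := by ring
  rw [this]
  calc (x ^ 2) ^ j * x ≡ 1 ^ j * x [ZMOD 8] := Int.ModEq.mul (Int.ModEq.pow j (odd_sq_mod8 hx)) rfl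
    _ = x := by ring

lemma even_pow_mod4 {x y : ℤ} (h : x ≡ y [ZMOD 2]) {i : ℕ} (hi : Even i) :
    x ^ i ≡ y ^ i [ZMOD 4] := by
  obtain ⟨j, rfl⟩ := hi
  have h1 : (2:ℤ) ∣ x ^ j - y ^ j := Int.ModEq.dvd ((h.pow j)).symm
  have h2 : (2:ℤ) ∣ x ^ j + y ^ j := by
    obtain ⟨c, hc⟩ := h1
    exact ⟨c + y ^ j, by linarith⟩
  obtain ⟨c, hc⟩ := h1
  obtain ⟨d, hd⟩ := h2
  refine Int.modEq_iff_dvd.mpr ⟨-(c * d), ?_⟩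
  have : y ^ (j + j) - x ^ (j + j) = -((x ^ j - y ^ j) * (x ^ j + y ^ j)) := by ring
  rw [this, hc, hd]; ring

/-- derivative values mod 4 depend only on argument mod 2 -/
lemma deriv_mod4 {x y : ℤ} (h : x ≡ y [ZMOD 2]) :
    (derivative f).eval x ≡ (derivative f).eval y [ZMOD 4] := by
  rw [eval_eq_sum_range (p := derivative f) x, eval_eq_sum_range (p := derivative f) y]
  refine Int.modEq_iff_dvd.mpr ?_
  rw [← Finset.sum_sub_distrib]
  refine Finset.dvd_sum fun i _ => ?_
  have hterm : (derivative f).coeff i * y ^ i - (derivative f).coeff i * x ^ i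
      = (derivative f).coeff i * (y ^ i - x ^ i) := by ring
  rw [hterm, coeff_derivative]
  rcases Nat.even_or_odd i with hi | hi
  · -- i even : 4 ∣ y^i - x^i
    have := Int.ModEq.dvd (even_pow_mod4 h hi)
    exact Dvd.dvd.mul_left this _
  · -- i odd : 2 ∣ (i+1), 2 ∣ y^i - x^i
    have h1 : (2:ℤ) ∣ ((i:ℤ) + 1) := by
      obtain ⟨j, hj⟩ := hi
      exact ⟨j + 1, by push_cast [hj]; ring⟩
    have h2 : (2:ℤ) ∣ y ^ i - x ^ i := Int.ModEq.dvd (h.pow i)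
    obtain ⟨c, hc⟩ := h1
    obtain ⟨d, hd⟩ := h2
    exact ⟨f.coeff (i + 1) * c * d, by rw [mul_assoc, hd, hc]; ring⟩

end Aux
section Aux2
variable (f : ℤ[X])

lemma even_coeff_split :
    ∑ i ∈ (Finset.range (f.natDegree + 1)).filter (fun i => Even i), f.coeff i
      = f.coeff 0 + f.coeff 2 + evenCoeffSumFour f := by
  classical
  have key : (Finset.range (f.natDegree + 1)).filter (fun i => Even i)
      = ((Finset.range (f.natDegree + 1)).filter (fun i => Even i ∧ ¬ 4 ≤ i))
        ∪ ((Finset.range (f.natDegree + 1)).filter (fun i => Even i ∧ 4 ≤ i)) := by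
    ext i
    simp only [Finset.mem_filter, Finset.mem_union, Finset.mem_range]
    tauto
  have hdisj : Disjoint ((Finset.range (f.natDegree + 1)).filter (fun i => Even i ∧ ¬ 4 ≤ i))
      ((Finset.range (f.natDegree + 1)).filter (fun i => Even i ∧ 4 ≤ i)) := by
    simp only [Finset.disjoint_left, Finset.mem_filter]
    tauto
  rw [key, Finset.sum_union hdisj]
  have h2 : ∑ i ∈ (Finset.range (f.natDegree + 1)).filter (fun i => Even i ∧ ¬ 4 ≤ i), f.coeff i
      = f.coeff 0 + f.coeff 2 := by
    rw [Finset.sum_subset (s₂ := ({0, 2} : Finset ℕ))]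
    · rw [Finset.sum_pair (by norm_num)]
    · intro i hi
      simp only [Finset.mem_filter, Finset.mem_range] at hi
      obtain ⟨hr, he, h4⟩ := hi
      simp only [Finset.mem_insert, Finset.mem_singleton]
      obtain ⟨j, hj⟩ := he
      omega
    · intro i hi hni
      simp only [Finset.mem_insert, Finset.mem_singleton] at hi
      simp only [Finset.mem_filter, Finset.mem_range, not_and, not_not] at hni
      apply coeff_eq_zero_of_natDegree_lt
      rcases hi with rfl | rfl
      · by_contra hc; exact absurd (hni (by omega) (by decide)) (by omega)
      · by_contra hc; exact absurd (hni (by omega) (by decide)) (by omega)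
  rw [h2, evenCoeffSumFour]

lemma odd_coeff_split :
    ∑ i ∈ (Finset.range (f.natDegree + 1)).filter (fun i => ¬ Even i), f.coeff i
      = f.coeff 1 + oddCoeffSum f := by
  classical
  have key : (Finset.range (f.natDegree + 1)).filter (fun i => ¬ Even i)
      = ((Finset.range (f.natDegree + 1)).filter (fun i => ¬ Even i ∧ ¬ 3 ≤ i))
        ∪ ((Finset.range (f.natDegree + 1)).filter (fun i => Odd i ∧ 3 ≤ i)) := by
    ext i
    simp only [Finset.mem_filter, Finset.mem_union, Finset.mem_range, ← Nat.not_even_iff_odd]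
    tauto
  have hdisj : Disjoint ((Finset.range (f.natDegree + 1)).filter (fun i => ¬ Even i ∧ ¬ 3 ≤ i))
      ((Finset.range (f.natDegree + 1)).filter (fun i => Odd i ∧ 3 ≤ i)) := by
    simp only [Finset.disjoint_left, Finset.mem_filter]
    tauto
  rw [key, Finset.sum_union hdisj]
  have h2 : ∑ i ∈ (Finset.range (f.natDegree + 1)).filter (fun i => ¬ Even i ∧ ¬ 3 ≤ i), f.coeff i
      = f.coeff 1 := by
    rw [Finset.sum_subset (s₂ := ({1} : Finset ℕ))]
    · rw [Finset.sum_singleton]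
    · intro i hi
      simp only [Finset.mem_filter, Finset.mem_range] at hi
      obtain ⟨hr, he, h3⟩ := hi
      simp only [Finset.mem_singleton]
      rcases Nat.even_or_odd i with h | h
      · exact absurd h he
      · obtain ⟨j, hj⟩ := h; omega
    · intro i hi hni
      simp only [Finset.mem_singleton] at hi
      subst hi
      simp only [Finset.mem_filter, Finset.mem_range, not_and, not_not] at hni
      apply coeff_eq_zero_of_natDegree_lt
      by_contra hc
      exact absurd (hni (by omega) (by decide)) (by omega)
  rw [h2, oddCoeffSum]

/-- value of f at an odd point mod 8 -/
lemma eval_odd_mod8 {x : ℤ} (hx : Odd x) :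
    f.eval x ≡ (f.coeff 0 + f.coeff 2 + evenCoeffSumFour f)
      + x * (f.coeff 1 + oddCoeffSum f) [ZMOD 8] := by
  classical
  rw [eval_eq_sum_range]
  have step1 : (∑ i ∈ Finset.range (f.natDegree + 1), f.coeff i * x ^ i)
      ≡ (∑ i ∈ Finset.range (f.natDegree + 1), f.coeff i * (if Even i then 1 else x)) [ZMOD 8] := by
    refine Int.modEq_iff_dvd.mpr ?_
    rw [← Finset.sum_sub_distrib]
    refine Finset.dvd_sum fun i _ => ?_
    by_cases hi : Even i
    · obtain ⟨c, hc⟩ := Int.ModEq.dvd (odd_pow_even_mod8 hx hi)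
      exact ⟨f.coeff i * c, by rw [if_pos hi, show f.coeff i * 1 - f.coeff i * x ^ i = f.coeff i * (1 - x^i) from by ring, hc]; ring⟩
    · have hoi : Odd i := Nat.not_even_iff_odd.mp hi
      obtain ⟨c, hc⟩ := Int.ModEq.dvd (odd_pow_odd_mod8 hx hoi)
      exact ⟨f.coeff i * c, by rw [if_neg hi, show f.coeff i * x - f.coeff i * x ^ i = f.coeff i * (x - x^i) from by ring, hc]; ring⟩
  have step2 : (∑ i ∈ Finset.range (f.natDegree + 1), f.coeff i * (if Even i then 1 else x))
      = (f.coeff 0 + f.coeff 2 + evenCoeffSumFour f) + x * (f.coeff 1 + oddCoeffSum f) := by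
    have hite : ∀ i, f.coeff i * (if Even i then 1 else x)
        = (if Even i then f.coeff i else f.coeff i * x) := by
      intro i; by_cases hi : Even i <;> simp [hi]
    simp_rw [hite]
    rw [Finset.sum_ite, ← even_coeff_split f]
    have : ∑ i ∈ (Finset.range (f.natDegree + 1)).filter (fun i => ¬ Even i), f.coeff i * x
        = (∑ i ∈ (Finset.range (f.natDegree + 1)).filter (fun i => ¬ Even i), f.coeff i) * x := by
      rw [Finset.sum_mul]
    rw [this, odd_coeff_split f]
    ring
  rw [← step2]
  exact step1

/-- value of f at a point ≡ 2 mod 4, mod 8 -/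
lemma eval_two_mod8 {x : ℤ} (hx : x ≡ 2 [ZMOD 4]) :
    f.eval x ≡ f.coeff 0 + f.coeff 1 * x + 4 * f.coeff 2 [ZMOD 8] := by
  classical
  obtain ⟨t, ht⟩ := Int.modEq_iff_dvd.mp hx
  set r : ℕ → ℤ := fun i => if i = 0 then 1 else if i = 1 then x else if i = 2 then 4 else 0 with hr
  have hr3 : ∀ j : ℕ, r (j + 3) = 0 := by
    intro j
    rw [hr]
    simp only [if_neg (by omega : ¬ j + 3 = 0), if_neg (by omega : ¬ j + 3 = 1),
      if_neg (by omega : ¬ j + 3 = 2)]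
  rw [eval_eq_sum_range]
  have step1 : (∑ i ∈ Finset.range (f.natDegree + 1), f.coeff i * x ^ i)
      ≡ (∑ i ∈ Finset.range (f.natDegree + 1), f.coeff i * r i) [ZMOD 8] := by
    refine Int.modEq_iff_dvd.mpr ?_
    rw [← Finset.sum_sub_distrib]
    refine Finset.dvd_sum fun i _ => ?_
    match i with
    | 0 => simp [hr]
    | 1 => simp [hr]
    | 2 =>
      have h22 : f.coeff 2 * r 2 - f.coeff 2 * x ^ 2 = f.coeff 2 * (4 - x ^ 2) := by
        rw [hr]; norm_num; ring
      rw [h22]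
      refine Dvd.dvd.mul_left ⟨-(2 * t ^ 2 - 2 * t), ?_⟩ _
      rw [show x = 2 - 4 * t from by omega]; ring
    | (j+3) =>
      rw [hr3 j, mul_zero]
      have h8 : (8:ℤ) ∣ x ^ 3 := by
        rw [show x = 2 - 4 * t from by omega]
        exact ⟨(1 - 2*t)^3, by ring⟩
      obtain ⟨c, hc⟩ := h8
      refine ⟨-(f.coeff (j+3) * (x ^ j * c)), ?_⟩
      rw [show (0:ℤ) - f.coeff (j+3) * x ^ (j+3) = -(f.coeff (j+3) * (x ^ j * x ^ 3)) from by ring, hc]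
      ring
  have step2 : (∑ i ∈ Finset.range (f.natDegree + 1), f.coeff i * r i)
      = f.coeff 0 + f.coeff 1 * x + 4 * f.coeff 2 := by
    have hU : ∑ i ∈ Finset.range (f.natDegree + 1), f.coeff i * r i
        = ∑ i ∈ Finset.range (f.natDegree + 1) ∪ Finset.range 3, f.coeff i * r i := by
      apply Finset.sum_subset Finset.subset_union_left
      intro i hi hni
      simp only [Finset.mem_range, Finset.mem_union] at hi hni
      rw [coeff_eq_zero_of_natDegree_lt (by omega), zero_mul]
    have hV : ∑ i ∈ Finset.range 3, f.coeff i * r i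
        = ∑ i ∈ Finset.range (f.natDegree + 1) ∪ Finset.range 3, f.coeff i * r i := by
      apply Finset.sum_subset Finset.subset_union_right
      intro i hi hni
      simp only [Finset.mem_range, Finset.mem_union] at hi hni
      have h3 : ¬ i < 3 := by omega
      match i, h3 with
      | (j+3), _ => rw [hr3 j, mul_zero]
    rw [hU, ← hV]
    rw [Finset.sum_range_succ, Finset.sum_range_succ, Finset.sum_range_one]
    rw [hr]
    norm_num
    ring
  rw [← step2]
  exact step1

lemma eval_zero' : f.eval 0 = f.coeff 0 := (coeff_zero_eq_eval_zero f).symm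

end Aux2
section Aux3
variable (f : ℤ[X])

/-- transfer of injectivity to integers -/
lemma hinj (hf : Permutational2 f) {n : ℕ} (hn : 1 ≤ n) {x y : ℤ}
    (h : f.eval x ≡ f.eval y [ZMOD ((2 ^ n : ℕ) : ℤ)]) : x ≡ y [ZMOD ((2 ^ n : ℕ) : ℤ)] := by
  have hc : ((f.eval x : ℤ) : ZMod (2 ^ n)) = ((f.eval y : ℤ) : ZMod (2 ^ n)) :=
    (ZMod.intCast_eq_intCast_iff _ _ _).mpr h
  rw [← evalCast, ← evalCast] at hc
  have := (hf n hn).injective hc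
  exact (ZMod.intCast_eq_intCast_iff _ _ _).mp this

lemma deriv_odd (hf : Permutational2 f) (x : ℤ) : Odd ((derivative f).eval x) := by
  rcases Int.even_or_odd ((derivative f).eval x) with he | ho
  · exfalso
    obtain ⟨d, hd⟩ := he
    obtain ⟨k, hk⟩ := f.binomExpansion x 2
    have hmod : f.eval (x + 2) ≡ f.eval x [ZMOD ((2 ^ 2 : ℕ) : ℤ)] := by
      refine Int.modEq_iff_dvd.mpr ⟨-(d + k), ?_⟩
      rw [hk, hd]; push_cast; ring
    have := hinj f hf (by norm_num) hmod
    have h4 : ((2 ^ 2 : ℕ) : ℤ) ∣ (x - (x + 2)) := Int.ModEq.dvd this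
    norm_num at h4
  · exact ho

lemma coeff_one_odd (hf : Permutational2 f) : Odd (f.coeff 1) := by
  have h := deriv_odd f hf 0
  rw [eval_zero', coeff_derivative] at h
  push_cast at h
  simpa using h

lemma prod_deriv_odd (hf : Permutational2 f) (m : ℕ) (x : ℤ) :
    Odd (∏ i ∈ Finset.range m, (derivative f).eval ((f.eval ·)^[i] x)) := by
  induction m with
  | zero => simp
  | succ m ih => rw [Finset.prod_range_succ]; exact ih.mul (deriv_odd f hf _)

lemma L_odd (hf : Permutational2 f) : Odd (f.coeff 1 + oddCoeffSum f) := by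
  rcases Int.even_or_odd (f.coeff 1 + oddCoeffSum f) with he | ho
  · exfalso
    set L := f.coeff 1 + oddCoeffSum f
    set C := f.coeff 0 + f.coeff 2 + evenCoeffSumFour f
    have h5 := eval_odd_mod8 f (⟨2, by norm_num⟩ : Odd (5:ℤ))
    have h1 := eval_odd_mod8 f (⟨0, by norm_num⟩ : Odd (1:ℤ))
    obtain ⟨d, hd⟩ := he
    have hmod : f.eval 5 ≡ f.eval 1 [ZMOD ((2 ^ 3 : ℕ) : ℤ)] := by
      have : ((2 ^ 3 : ℕ) : ℤ) = 8 := by norm_num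
      rw [this]
      calc f.eval 5 ≡ C + 5 * L [ZMOD 8] := h5
        _ ≡ C + 1 * L [ZMOD 8] := by
            refine Int.modEq_iff_dvd.mpr ⟨-d, ?_⟩; rw [hd]; ring
        _ ≡ f.eval 1 [ZMOD 8] := h1.symm
    have := hinj f hf (by norm_num) hmod
    have h8 : ((2 ^ 3 : ℕ) : ℤ) ∣ (1 - 5) := Int.ModEq.dvd this
    norm_num at h8
  · exact ho

lemma eval_one_even (hf : Permutational2 f) (h0 : Odd (f.coeff 0)) : Even (f.eval 1) := by
  rcases Int.even_or_odd (f.eval 1) with he | ho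
  · exact he
  · exfalso
    have hmod : f.eval 1 ≡ f.eval 0 [ZMOD ((2 ^ 1 : ℕ) : ℤ)] := by
      rw [eval_zero']
      have : ((2 ^ 1 : ℕ) : ℤ) = 2 := by norm_num
      rw [this]
      obtain ⟨a, ha⟩ := ho; obtain ⟨b, hb⟩ := h0
      refine Int.modEq_iff_dvd.mpr ⟨b - a, by omega⟩
    have := hinj f hf le_rfl hmod
    have h2 : ((2 ^ 1 : ℕ) : ℤ) ∣ (0 - 1) := Int.ModEq.dvd this
    norm_num at h2
  
lemma M_even (hf : Permutational2 f) : Even (f.coeff 2 + evenCoeffSumFour f) := by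
  set L := f.coeff 1 + oddCoeffSum f with hL
  set M := f.coeff 2 + evenCoeffSumFour f with hM
  have h1 := eval_odd_mod8 f (⟨0, by norm_num⟩ : Odd (1:ℤ))
  rcases Int.even_or_odd (f.coeff 0) with hA | hA
  · -- coeff 0 even: then f.eval 1 odd (since f bijective mod 2 means f0, f1 differ mod 2)
    -- f1 ≡ A + M + L mod 2 ; f0 = A even. f1 must be odd: A+M+L odd => M+L odd => M even iff L odd
    rcases Int.even_or_odd (f.eval 1) with he | ho
    · exfalso
      have hmod : f.eval 1 ≡ f.eval 0 [ZMOD ((2 ^ 1 : ℕ) : ℤ)] := by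
        rw [eval_zero']
        have : ((2 ^ 1 : ℕ) : ℤ) = 2 := by norm_num
        rw [this]
        obtain ⟨a, ha⟩ := he; obtain ⟨b, hb⟩ := hA
        refine Int.modEq_iff_dvd.mpr ⟨b - a, by omega⟩
      have := hinj f hf le_rfl hmod
      have h2 : ((2 ^ 1 : ℕ) : ℤ) ∣ (0 - 1) := Int.ModEq.dvd this
      norm_num at h2
    · -- f1 odd, f1 ≡ A+M+L mod 8 so mod 2
      have hL' := L_odd f hf
      rw [← hL] at hL'
      have hd := Int.ModEq.dvd h1
      simp only [Int.ModEq] at h1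
      obtain ⟨c, hc⟩ := hd
      obtain ⟨a, ha⟩ := ho
      obtain ⟨b, hb⟩ := hA
      obtain ⟨l, hl⟩ := hL'
      rcases Int.even_or_odd M with hMe | hMo
      · exact hMe
      · exfalso; obtain ⟨m, hm⟩ := hMo; omega
  · -- coeff 0 odd: f.eval 1 even
    have ho := eval_one_even f hf hA
    have hL' := L_odd f hf
    rw [← hL] at hL'
    have hd := Int.ModEq.dvd h1
    obtain ⟨c, hc⟩ := hd
    obtain ⟨a, ha⟩ := ho
    obtain ⟨b, hb⟩ := hA
    obtain ⟨l, hl⟩ := hL'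
    rcases Int.even_or_odd M with hMe | hMo
    · exact hMe
    · exfalso; obtain ⟨m, hm⟩ := hMo; omega

lemma parity_orbit (hf : Permutational2 f) (h0 : Odd (f.coeff 0)) (k : ℕ) :
    (f.eval ·)^[k] 0 ≡ (k : ℤ) [ZMOD 2] := by
  induction k with
  | zero => rfl
  | succ k ih =>
    rw [Function.iterate_succ_apply']
    have h1 : Even (f.eval 1) := eval_one_even f hf h0
    rcases Int.even_or_odd ((f.eval ·)^[k] 0) with he | ho
    · -- iterate even, so k even, f(it) ≡ f(0) = coeff 0 ≡ 1 mod 2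
      have hiter : (f.eval ·)^[k] 0 ≡ 0 [ZMOD 2] := by
        obtain ⟨a, ha⟩ := he
        exact Int.modEq_iff_dvd.mpr ⟨-a, by omega⟩
      have := modeq_eval f (N := 2) hiter
      rw [eval_zero'] at this
      have hk : (k : ℤ) % 2 = 0 := by
        have := ih.symm.trans hiter
        simp only [Int.ModEq] at this; omega
      obtain ⟨b, hb⟩ := h0
      simp only [Int.ModEq] at this ⊢
      push_cast
      omega
    · have hiter : (f.eval ·)^[k] 0 ≡ 1 [ZMOD 2] := by
        obtain ⟨a, ha⟩ := ho
        exact Int.modEq_iff_dvd.mpr ⟨-a, by omega⟩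
      have := modeq_eval f (N := 2) hiter
      have hk : (k : ℤ) % 2 = 1 := by
        have := ih.symm.trans hiter
        simp only [Int.ModEq] at this; omega
      obtain ⟨a, ha⟩ := h1
      simp only [Int.ModEq] at this ⊢
      push_cast
      omega

end Aux3
def Sorb (f : Polynomial ℤ) (n : ℕ) : Prop :=
  ∀ y : ℤ, ∃ k : ℕ, (f.eval ·)^[k] 0 ≡ y [ZMOD ((2:ℤ) ^ n)]

def Crit (f : Polynomial ℤ) (n : ℕ) : Prop :=
  (f.eval ·)^[2 ^ n] 0 ≡ (2:ℤ) ^ n [ZMOD ((2:ℤ) ^ (n + 1))]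

section Aux4
variable (f : ℤ[X])

lemma Sorb_mono {n m : ℕ} (h : m ≤ n) (hS : Sorb f n) : Sorb f m := by
  intro y
  obtain ⟨k, hk⟩ := hS y
  exact ⟨k, hk.of_dvd (pow_dvd_pow 2 h)⟩

lemma period_gen {N : ℤ} {p : ℕ} (hp : (f.eval ·)^[p] 0 ≡ 0 [ZMOD N]) (q r : ℕ) :
    (f.eval ·)^[r + q * p] 0 ≡ (f.eval ·)^[r] 0 [ZMOD N] := by
  induction q with
  | zero => simp
  | succ q ih =>
    have : r + (q + 1) * p = (r + q * p) + p := by ring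
    rw [this, Function.iterate_add_apply]
    calc (f.eval ·)^[r + q * p] ((f.eval ·)^[p] 0)
        ≡ (f.eval ·)^[r + q * p] 0 [ZMOD N] := modeq_iter f hp _
      _ ≡ (f.eval ·)^[r] 0 [ZMOD N] := ih

/-- P1 : the orbit returns to 0 mod 2^n after 2^n steps -/
lemma orbit_return (hf : Permutational2 f) : ∀ n : ℕ, Sorb f n →
    (f.eval ·)^[2 ^ n] 0 ≡ 0 [ZMOD ((2:ℤ) ^ n)] := by
  intro n
  induction n with
  | zero =>
    intro _
    have h1 : ((2:ℤ) ^ 0) = 1 := by norm_num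
    rw [h1]
    exact Int.modEq_one
  | succ n ih =>
    intro hS
    have hSn : Sorb f n := Sorb_mono f (Nat.le_succ n) hS
    have ha : (2:ℤ) ^ n ∣ (f.eval ·)^[2 ^ n] 0 := by
      have := ih hSn
      simpa using (Int.ModEq.dvd this.symm)
    obtain ⟨u, hu⟩ := ha
    have hsplit : (2:ℕ) ^ (n + 1) = 2 ^ n + 2 ^ n := by ring
    rw [hsplit, Function.iterate_add_apply]
    rcases Int.even_or_odd u with hue | huo
    · -- 2^(n+1) divides a; iterate stays ≡ a ≡ 0
      obtain ⟨v, hv⟩ := hue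
      have ha0 : (f.eval ·)^[2 ^ n] 0 ≡ 0 [ZMOD ((2:ℤ) ^ (n + 1))] := by
        refine Int.modEq_iff_dvd.mpr ⟨-v, ?_⟩
        rw [hu, hv]; ring
      calc (f.eval ·)^[2 ^ n] ((f.eval ·)^[2 ^ n] 0)
          ≡ (f.eval ·)^[2 ^ n] 0 [ZMOD ((2:ℤ) ^ (n+1))] := modeq_iter f ha0 _
        _ ≡ 0 [ZMOD ((2:ℤ) ^ (n+1))] := ha0
    · -- a = 2^n * odd : use Taylor
      rcases Nat.eq_zero_or_pos n with rfl | hn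
      · -- n = 0 : a = f(0) odd; show f(f(0)) even
        have h0 : Odd (f.coeff 0) := by
          rw [← eval_zero']
          have he : f.eval 0 = u := by simpa using hu
          rw [he]; exact huo
        have hgoal : (f.eval ·)^[2 ^ 0] ((f.eval ·)^[2 ^ 0] 0) = (f.eval ·)^[2] 0 := by
          rw [← Function.iterate_add_apply]
          norm_num
        rw [hgoal]
        have h21 : ((2:ℤ) ^ (0 + 1)) = 2 := by norm_num
        rw [h21]
        exact (parity_orbit f hf h0 2).trans (Int.modEq_iff_dvd.mpr ⟨-1, by norm_num⟩)
      · have htay := taylor_iter f ((2:ℤ) ^ n) (2 ^ n) 0 u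
        rw [zero_add] at htay
        have h2n : ((2:ℤ) ^ n) ^ 2 = 2 ^ (2 * n) := by ring
        rw [h2n] at htay
        have hmod : (f.eval ·)^[2 ^ n] ((2:ℤ) ^ n * u)
            ≡ (f.eval ·)^[2 ^ n] 0 + 2 ^ n * u *
              (∏ i ∈ Finset.range (2 ^ n), (derivative f).eval ((f.eval ·)^[i] 0))
              [ZMOD ((2:ℤ) ^ (n + 1))] :=
          htay.of_dvd (pow_dvd_pow 2 (by omega))
        rw [← hu] at hmod
        set P := ∏ i ∈ Finset.range (2 ^ n), (derivative f).eval ((f.eval ·)^[i] 0) with hP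
        have hPodd : Odd P := prod_deriv_odd f hf _ _
        refine hmod.trans ?_
        rw [hu]
        obtain ⟨w, hw⟩ := hPodd
        refine Int.modEq_iff_dvd.mpr ⟨-(u * (1 + w)), ?_⟩
        have h2 : (2:ℤ) ^ (n + 1) = 2 ^ n * 2 := by ring
        rw [h2, hw]
        ring
end Aux4
section Aux5
variable (f : ℤ[X])

lemma chain (hf : Permutational2 f) (n : ℕ) :
    Sorb f (n + 1) ↔ (Sorb f n ∧ Crit f n) := by
  constructor
  · intro hS
    have hSn : Sorb f n := Sorb_mono f (Nat.le_succ n) hS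
    refine ⟨hSn, ?_⟩
    have ha : (2:ℤ) ^ n ∣ (f.eval ·)^[2 ^ n] 0 := by
      simpa using (Int.ModEq.dvd (orbit_return f hf n hSn).symm)
    obtain ⟨u, hu⟩ := ha
    rcases Int.even_or_odd u with hue | huo
    · -- contradiction via counting
      exfalso
      obtain ⟨v, hv⟩ := hue
      have hp : (f.eval ·)^[2 ^ n] 0 ≡ 0 [ZMOD ((2:ℤ) ^ (n + 1))] := by
        refine Int.modEq_iff_dvd.mpr ⟨-v, ?_⟩
        rw [hu, hv]; ring
      -- periodic orbit mod 2^(n+1) with period 2^n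
      have hper : ∀ k : ℕ, (f.eval ·)^[k] 0 ≡ (f.eval ·)^[k % 2 ^ n] 0 [ZMOD ((2:ℤ) ^ (n + 1))] := by
        intro k
        have hk : k = k % 2 ^ n + (k / 2 ^ n) * (2 ^ n) := (Nat.mod_add_div' k (2 ^ n)).symm
        calc (f.eval ·)^[k] 0 = (f.eval ·)^[k % 2 ^ n + (k / 2 ^ n) * 2 ^ n] 0 := by rw [← hk]
          _ ≡ (f.eval ·)^[k % 2 ^ n] 0 [ZMOD ((2:ℤ) ^ (n + 1))] := period_gen f hp _ _
      -- injection Fin (2^(n+1)) → Fin (2^n)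
      have hinj2 : Function.Injective (fun y : Fin (2 ^ (n + 1)) =>
          (⟨(hS ((y : ℕ) : ℤ)).choose % 2 ^ n, Nat.mod_lt _ (Nat.pow_pos (by norm_num))⟩ : Fin (2 ^ n))) := by
        intro y1 y2 h12
        simp only [Fin.mk.injEq] at h12
        have hk1 := (hS ((y1 : ℕ) : ℤ)).choose_spec
        have hk2 := (hS ((y2 : ℕ) : ℤ)).choose_spec
        have e1 := (hper (hS ((y1 : ℕ) : ℤ)).choose).symm.trans hk1
        have e2 := (hper (hS ((y2 : ℕ) : ℤ)).choose).symm.trans hk2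
        rw [h12] at e1
        have e3 : ((y1 : ℕ) : ℤ) ≡ ((y2 : ℕ) : ℤ) [ZMOD ((2:ℤ) ^ (n + 1))] :=
          (e1.symm.trans e2)
        have e4 : (y1 : ℕ) ≡ (y2 : ℕ) [MOD 2 ^ (n + 1)] := by
          have h2 : ((2:ℤ) ^ (n + 1)) = (((2:ℕ) ^ (n + 1) : ℕ) : ℤ) := by push_cast; ring
          rw [h2] at e3
          exact Int.natCast_modEq_iff.mp e3
        exact Fin.ext (e4.eq_of_lt_of_lt y1.isLt y2.isLt)
      have hcard := Fintype.card_le_of_injective _ hinj2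
      simp only [Fintype.card_fin] at hcard
      have : (2:ℕ) ^ n < 2 ^ (n + 1) := Nat.pow_lt_pow_right (by norm_num) (Nat.lt_succ_self n)
      omega
    · -- Crit holds
      obtain ⟨z, hz⟩ := huo
      refine Int.modEq_iff_dvd.mpr ⟨-z, ?_⟩
      rw [hu, hz]; ring
  · rintro ⟨hSn, hC⟩
    rcases Nat.eq_zero_or_pos n with rfl | hn
    · -- n = 0
      intro y
      have h0 : Odd (f.coeff 0) := by
        have := hC
        simp only [Crit, pow_zero, pow_one] at this
        have hd := Int.ModEq.dvd this
        rw [← eval_zero']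
        have : f.eval ((0:ℤ)) = (f.eval ·)^[2 ^ 0] 0 := by norm_num
        rw [this]
        obtain ⟨c, hc⟩ := hd
        simp only [pow_zero, pow_one] at hc ⊢
        exact ⟨-c, by omega⟩
      rcases Int.even_or_odd y with hy | hy
      · refine ⟨0, ?_⟩
        obtain ⟨c, hc⟩ := hy
        simp only [Function.iterate_zero, id_eq, pow_one]
        exact Int.modEq_iff_dvd.mpr ⟨c, by omega⟩
      · refine ⟨1, ?_⟩
        simp only [pow_one, Function.iterate_one]
        rw [eval_zero']
        obtain ⟨a, ha⟩ := h0
        obtain ⟨b, hb⟩ := hy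
        exact Int.modEq_iff_dvd.mpr ⟨b - a, by omega⟩
    · intro y
      obtain ⟨k, hk⟩ := hSn y
      have hd : (2:ℤ) ^ n ∣ ((f.eval ·)^[k] 0 - y) := Int.ModEq.dvd hk.symm
      obtain ⟨w, hw⟩ := hd
      rcases Int.even_or_odd w with hwe | hwo
      · refine ⟨k, ?_⟩
        obtain ⟨v, hv⟩ := hwe
        refine Int.modEq_iff_dvd.mpr ⟨-v, ?_⟩
        have h2 : (2:ℤ) ^ (n + 1) = 2 ^ n * 2 := by ring
        rw [h2]
        linear_combination -hw - (2:ℤ) ^ n * hv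
      · -- shift by 2^n steps
        refine ⟨k + 2 ^ n, ?_⟩
        obtain ⟨t, ht⟩ : ∃ t : ℤ, (f.eval ·)^[2 ^ n] 0 = 2 ^ n * (1 + 2 * t) := by
          have hd2 := Int.ModEq.dvd hC
          obtain ⟨c, hc⟩ := hd2
          exact ⟨-c, by rw [show (2:ℤ)^n * (1 + 2 * (-c)) = 2^n - 2^(n+1) * c from by ring]; omega⟩
        rw [Function.iterate_add_apply]
        rw [ht]
        have htay := taylor_iter f ((2:ℤ) ^ n) k 0 (1 + 2 * t)
        rw [zero_add] at htay
        have h2n : ((2:ℤ) ^ n) ^ 2 = 2 ^ (2 * n) := by ring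
        rw [h2n] at htay
        have hmod := htay.of_dvd (pow_dvd_pow (2:ℤ) (by omega : n + 1 ≤ 2 * n))
        refine hmod.trans ?_
        obtain ⟨s, hs⟩ := prod_deriv_odd f hf k 0
        obtain ⟨o, ho⟩ := hwo
        refine Int.modEq_iff_dvd.mpr ⟨-(o + 1 + s + t * (2 * s + 1)), ?_⟩
        have hy : y = (f.eval ·)^[k] 0 - 2 ^ n * w := by linarith [hw]
        have h2 : (2:ℤ) ^ (n + 1) = 2 ^ n * 2 := by ring
        rw [hy, hs, ho, h2]
        ring
end Aux5
section Aux6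
variable (f : ℤ[X])

lemma crit_rec (hf : Permutational2 f) (h0 : Crit f 0) (n : ℕ) (hn : 2 ≤ n)
    (hC : Crit f n) : Crit f (n + 1) := by
  have hcoeff0 : Odd (f.coeff 0) := by
    have hd := Int.ModEq.dvd h0
    obtain ⟨c, hc⟩ := hd
    simp only [pow_zero, pow_one, Function.iterate_one] at hc
    rw [← eval_zero']
    exact ⟨-c, by omega⟩
  -- P ≡ 1 mod 4
  set m := 2 ^ (n - 1) with hm
  have hmm : 2 ^ n = m + m := by
    rw [hm, ← two_mul, ← pow_succ']
    congr 1
    omega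
  set Q := ∏ i ∈ Finset.range m, (derivative f).eval ((f.eval ·)^[i] 0) with hQ
  have hsplit : (∏ i ∈ Finset.range (2 ^ n), (derivative f).eval ((f.eval ·)^[i] 0))
      = Q * ∏ i ∈ Finset.range m, (derivative f).eval ((f.eval ·)^[m + i] 0) := by
    rw [hmm, Finset.prod_range_add]
  have hmeven : Even m := by
    rw [hm]
    exact (Nat.even_pow' (by omega)).mpr even_two
  have hpair : ∀ i ∈ Finset.range m, (derivative f).eval ((f.eval ·)^[m + i] 0)
      ≡ (derivative f).eval ((f.eval ·)^[i] 0) [ZMOD 4] := by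
    intro i _
    apply deriv_mod4
    have h1 := parity_orbit f hf hcoeff0 (m + i)
    have h2 := parity_orbit f hf hcoeff0 i
    have h3 : ((m + i : ℕ) : ℤ) ≡ (i : ℤ) [ZMOD 2] := by
      obtain ⟨w, hw⟩ := hmeven
      refine Int.modEq_iff_dvd.mpr ⟨-w, ?_⟩
      push_cast [hw]
      ring
    exact (h1.trans h3).trans h2.symm
  have hPQ : (∏ i ∈ Finset.range (2 ^ n), (derivative f).eval ((f.eval ·)^[i] 0))
      ≡ Q * Q [ZMOD 4] := by
    rw [hsplit]
    exact Int.ModEq.mul rfl (modeq_prod _ _ (Finset.range m) hpair)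
  have hQodd : Odd Q := prod_deriv_odd f hf m 0
  have hP1 : (∏ i ∈ Finset.range (2 ^ n), (derivative f).eval ((f.eval ·)^[i] 0))
      ≡ 1 [ZMOD 4] := by
    refine hPQ.trans ?_
    obtain ⟨q, hq⟩ := hQodd
    refine Int.modEq_iff_dvd.mpr ⟨-(q * q + q), ?_⟩
    rw [hq]; ring
  -- main computation
  obtain ⟨c, hc⟩ : ∃ c : ℤ, (f.eval ·)^[2 ^ n] 0 = 2 ^ n * (1 + 2 * c) := by
    have hd := Int.ModEq.dvd hC
    obtain ⟨w, hw⟩ := hd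
    exact ⟨-w, by linear_combination -hw⟩
  obtain ⟨p, hp⟩ : ∃ p : ℤ, (∏ i ∈ Finset.range (2 ^ n), (derivative f).eval ((f.eval ·)^[i] 0))
      = 1 + 4 * p := by
    have hd := Int.ModEq.dvd hP1
    obtain ⟨w, hw⟩ := hd
    exact ⟨-w, by linear_combination -hw⟩
  have hstep : (2:ℕ) ^ (n + 1) = 2 ^ n + 2 ^ n := by ring
  rw [Crit, hstep, Function.iterate_add_apply, hc]
  have htay := taylor_iter f ((2:ℤ) ^ n) (2 ^ n) 0 (1 + 2 * c)
  rw [zero_add] at htay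
  have h2n : ((2:ℤ) ^ n) ^ 2 = 2 ^ (2 * n) := by ring
  rw [h2n] at htay
  have hmod := htay.of_dvd (pow_dvd_pow (2:ℤ) (by omega : n + 1 + 1 ≤ 2 * n))
  refine hmod.trans ?_
  rw [hc, hp]
  refine Int.modEq_iff_dvd.mpr ⟨-(c + p + 2 * c * p), ?_⟩
  have h4 : (2:ℤ) ^ (n + 1 + 1) = 2 ^ n * 4 := by ring
  have h5 : (2:ℤ) ^ (n + 1) = 2 ^ n * 2 := by ring
  rw [h4, h5]
  ring
end Aux6
section Aux7
variable (f : ℤ[X])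

lemma allCrit_iff (hf : Permutational2 f) :
    (∀ n, Crit f n) ↔ (Crit f 0 ∧ Crit f 1 ∧ Crit f 2) := by
  constructor
  · exact fun h => ⟨h 0, h 1, h 2⟩
  · rintro ⟨h0, h1, h2⟩ n
    induction n with
    | zero => exact h0
    | succ n ih =>
      rcases Nat.lt_or_ge n 2 with h | h
      · interval_cases n
        · exact h1
        · exact h2
      · exact crit_rec f hf h0 n h ih

lemma allSorb_iff_allCrit (hf : Permutational2 f) :
    (∀ n, Sorb f n) ↔ (∀ n, Crit f n) := by
  constructor
  · exact fun h n => ((chain f hf n).mp (h (n + 1))).2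
  · intro h n
    induction n with
    | zero =>
      intro y
      refine ⟨0, ?_⟩
      have h1 : ((2:ℤ) ^ 0) = 1 := by norm_num
      rw [h1]
      exact Int.modEq_one
    | succ n ih => exact (chain f hf n).mpr ⟨ih, h n⟩

lemma T_iff_S (hf : Permutational2 f) :
    (∀ n : ℕ, 1 ≤ n → TransitiveMod f (2 ^ n)) ↔ (∀ n, Sorb f n) := by
  have hcast : ∀ n : ℕ, (((2:ℕ) ^ n : ℕ) : ℤ) = (2:ℤ) ^ n := by intro n; push_cast; ring
  constructor
  · intro hT n
    rcases Nat.eq_zero_or_pos n with rfl | hn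
    · intro y
      refine ⟨0, ?_⟩
      have h1 : ((2:ℤ) ^ 0) = 1 := by norm_num
      rw [h1]
      exact Int.modEq_one
    · intro y
      obtain ⟨k, hk⟩ := hT n hn ((0 : ℤ) : ZMod (2 ^ n)) ((y : ℤ) : ZMod (2 ^ n))
      rw [iterCast] at hk
      have := (ZMod.intCast_eq_intCast_iff _ _ _).mp hk
      rw [hcast n] at this
      exact ⟨k, this⟩
  · intro hS n hn x y
    obtain ⟨X, hX⟩ := ZMod.intCast_surjective x
    obtain ⟨Y, hY⟩ := ZMod.intCast_surjective y
    obtain ⟨k1, hk1⟩ := hS n X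
    obtain ⟨k2, hk2⟩ := hS n Y
    have hret := orbit_return f hf n (hS n)
    set j := k2 + k1 * (2 ^ n - 1) with hj
    have hjk : j + k1 = k2 + k1 * 2 ^ n := by
      have h1 : k1 * (2 ^ n - 1) = k1 * 2 ^ n - k1 := Nat.mul_sub_one _ _
      have h2 : k1 ≤ k1 * 2 ^ n := Nat.le_mul_of_pos_right _ (Nat.pow_pos (by norm_num))
      omega
    have e1 : (f.eval ·)^[j] X ≡ (f.eval ·)^[j + k1] 0 [ZMOD ((2:ℤ) ^ n)] := by
      have hiter : (f.eval ·)^[j + k1] 0 = (f.eval ·)^[j] ((f.eval ·)^[k1] 0) :=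
        Function.iterate_add_apply _ j k1 0
      rw [hiter]
      exact modeq_iter f hk1.symm j
    have e2 : (f.eval ·)^[j + k1] 0 ≡ (f.eval ·)^[k2] 0 [ZMOD ((2:ℤ) ^ n)] := by
      rw [hjk]
      exact period_gen f hret k1 k2
    have e3 : (f.eval ·)^[j] X ≡ Y [ZMOD ((2:ℤ) ^ n)] := (e1.trans e2).trans hk2
    refine ⟨j, ?_⟩
    rw [← hX, iterCast, ← hY]
    refine (ZMod.intCast_eq_intCast_iff _ _ _).mpr ?_
    rw [hcast n]
    exact e3
end Aux7
section Final
variable (f : ℤ[X])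

lemma final_decide :
    ∀ A a1 a2 L M : ZMod 8,
      (ZMod.castHom (by norm_num : (2:ℕ) ∣ 8) (ZMod 2)) A = 1 →
      (ZMod.castHom (by norm_num : (2:ℕ) ∣ 8) (ZMod 2)) a1 = 1 →
      (ZMod.castHom (by norm_num : (2:ℕ) ∣ 8) (ZMod 2)) L = 1 →
      (ZMod.castHom (by norm_num : (2:ℕ) ∣ 8) (ZMod 2)) M = 0 →
      (((ZMod.castHom (by norm_num : (4:ℕ) ∣ 8) (ZMod 4)) (A + M + A * L) = 2 ∧
          A + M + (A + a1 * (A + M + A * L) + 4 * a2) * L = 4)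
        ↔ ((ZMod.castHom (by norm_num : (4:ℕ) ∣ 8) (ZMod 4)) (2 * a2)
              = (ZMod.castHom (by norm_num : (4:ℕ) ∣ 8) (ZMod 4)) (L - a1) ∧
           (ZMod.castHom (by norm_num : (4:ℕ) ∣ 8) (ZMod 4)) (a2 + a1 - 1)
              = (ZMod.castHom (by norm_num : (4:ℕ) ∣ 8) (ZMod 4)) (M - a2))) := by
  decide

-- helpers
lemma modeq_iff_zmod (N : ℕ) [NeZero N] (a b : ℤ) :
    a ≡ b [ZMOD (N:ℤ)] ↔ ((a : ZMod N) = (b : ZMod N)) :=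
  (ZMod.intCast_eq_intCast_iff a b N).symm

lemma cast48 (a : ℤ) :
    ((a : ZMod 4)) = (ZMod.castHom (by norm_num : (4:ℕ) ∣ 8) (ZMod 4)) ((a : ZMod 8)) :=
  (map_intCast (ZMod.castHom (by norm_num : (4:ℕ) ∣ 8) (ZMod 4)) a).symm

lemma cast28 (a : ℤ) :
    ((a : ZMod 2)) = (ZMod.castHom (by norm_num : (2:ℕ) ∣ 8) (ZMod 2)) ((a : ZMod 8)) :=
  (map_intCast (ZMod.castHom (by norm_num : (2:ℕ) ∣ 8) (ZMod 2)) a).symm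

lemma odd_cast2 {a : ℤ} (h : Odd a) : ((a : ZMod 2)) = 1 := by
  obtain ⟨k, hk⟩ := h
  subst hk
  push_cast
  rw [show ((2:ZMod 2)) = 0 from rfl]
  ring

lemma even_cast2 {a : ℤ} (h : Even a) : ((a : ZMod 2)) = 0 := by
  obtain ⟨k, hk⟩ := h
  subst hk
  push_cast
  rw [← two_mul, show ((2:ZMod 2)) = 0 from rfl]
  ring

lemma crit0_iff : Crit f 0 ↔ f.coeff 0 ≡ 1 [ZMOD 2] := by
  have h1 : Crit f 0 ↔ f.eval 0 ≡ 1 [ZMOD 2] := by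
    unfold Crit
    norm_num
  rw [h1, eval_zero']

lemma crit_iff_coeffs (hf : Permutational2 f) (h0 : Odd (f.coeff 0)) :
    ((Crit f 1 ∧ Crit f 2)) ↔
      (2 * f.coeff 2 ≡ oddCoeffSum f [ZMOD 4] ∧
       f.coeff 2 + f.coeff 1 - 1 ≡ evenCoeffSumFour f [ZMOD 4]) := by
  set A := f.coeff 0 with hA
  set a1 := f.coeff 1 with ha1
  set a2 := f.coeff 2 with ha2
  set L := f.coeff 1 + oddCoeffSum f with hL
  set M := f.coeff 2 + evenCoeffSumFour f with hM
  have ha1o : Odd a1 := coeff_one_odd f hf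
  have hLo : Odd L := L_odd f hf
  have hMe : Even M := M_even f hf
  -- the orbit values
  have hit2 : (f.eval ·)^[2] 0 = f.eval (f.eval 0) := by
    rw [show (2:ℕ) = 1 + 1 from rfl, Function.iterate_add_apply, Function.iterate_one]
  have hg2 : (f.eval ·)^[2] 0 ≡ A + M + A * L [ZMOD 8] := by
    rw [hit2, eval_zero', ← hA]
    have := eval_odd_mod8 f h0
    refine this.trans (Int.modEq_iff_dvd.mpr ⟨0, by rw [hL, hM]; ring⟩)
  -- ZMod versions
  have hg2c : (((f.eval ·)^[2] 0 : ℤ) : ZMod 8) = ((A : ZMod 8) + M + A * L) := by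
    have := (modeq_iff_zmod 8 _ _).mp hg2
    rw [this]
    push_cast
    ring
  have hC1iff : Crit f 1 ↔
      (ZMod.castHom (by norm_num : (4:ℕ) ∣ 8) (ZMod 4))
        ((A : ZMod 8) + M + A * L) = 2 := by
    have h1 : Crit f 1 ↔ (f.eval ·)^[2] 0 ≡ 2 [ZMOD (4:ℤ)] := by
      unfold Crit
      norm_num
    rw [h1, show ((4:ℤ)) = ((4:ℕ):ℤ) from by norm_num, modeq_iff_zmod]
    rw [cast48 ((f.eval ·)^[2] 0), hg2c]
    norm_num
  have hb24 : Crit f 1 → (f.eval ·)^[2] 0 ≡ 2 [ZMOD 4] := by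
    intro h
    have h1 : Crit f 1 ↔ (f.eval ·)^[2] 0 ≡ 2 [ZMOD (4:ℤ)] := by
      unfold Crit; norm_num
    exact h1.mp h
  -- computation of g4 mod 8, given g2 ≡ 2 mod 4
  have hg4 : ((f.eval ·)^[2] 0 ≡ 2 [ZMOD 4]) →
      (((f.eval ·)^[4] 0 : ℤ) : ZMod 8)
        = ((A:ZMod 8) + M + ((A:ZMod 8) + a1 * ((A:ZMod 8) + M + A * L) + 4 * a2) * L) := by
    intro hb
    have hit3 : (f.eval ·)^[3] 0 = f.eval ((f.eval ·)^[2] 0) := by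
      rw [show (3:ℕ) = 1 + 2 from rfl, Function.iterate_add_apply, Function.iterate_one]
    have hit4 : (f.eval ·)^[4] 0 = f.eval ((f.eval ·)^[3] 0) := by
      rw [show (4:ℕ) = 1 + 3 from rfl, Function.iterate_add_apply, Function.iterate_one]
    have hg3 : (f.eval ·)^[3] 0 ≡ A + a1 * ((f.eval ·)^[2] 0) + 4 * a2 [ZMOD 8] := by
      rw [hit3]
      exact eval_two_mod8 f hb
    have hodd3 : Odd ((f.eval ·)^[3] 0) := by
      have hp := parity_orbit f hf h0 3
      have hd := Int.ModEq.dvd hp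
      obtain ⟨c, hc⟩ := hd
      exact ⟨-c + 1, by push_cast at hc ⊢; omega⟩
    have hg4' : (f.eval ·)^[4] 0 ≡ (A + M) + ((f.eval ·)^[3] 0) * L [ZMOD 8] := by
      rw [hit4]
      have := eval_odd_mod8 f hodd3
      refine this.trans (Int.modEq_iff_dvd.mpr ⟨0, by rw [hL, hM]; ring⟩)
    have hc4 := (modeq_iff_zmod 8 _ _).mp hg4'
    have hc3 := (modeq_iff_zmod 8 _ _).mp hg3
    rw [hc4]
    push_cast
    rw [hc3]
    push_cast
    rw [hg2c]
  have hC2iff : ((f.eval ·)^[2] 0 ≡ 2 [ZMOD 4]) → (Crit f 2 ↔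
      ((A:ZMod 8) + M + ((A:ZMod 8) + a1 * ((A:ZMod 8) + M + A * L) + 4 * a2) * L = 4)) := by
    intro hb
    have h1 : Crit f 2 ↔ (f.eval ·)^[4] 0 ≡ 4 [ZMOD (8:ℤ)] := by
      unfold Crit; norm_num
    rw [h1, show ((8:ℤ)) = ((8:ℕ):ℤ) from by norm_num, modeq_iff_zmod, hg4 hb]
    norm_num
  -- hypotheses for final_decide
  have e2A : (ZMod.castHom (by norm_num : (2:ℕ) ∣ 8) (ZMod 2)) ((A : ZMod 8)) = 1 := by
    rw [← cast28]; exact odd_cast2 h0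
  have e2a1 : (ZMod.castHom (by norm_num : (2:ℕ) ∣ 8) (ZMod 2)) ((a1 : ZMod 8)) = 1 := by
    rw [← cast28]; exact odd_cast2 ha1o
  have e2L : (ZMod.castHom (by norm_num : (2:ℕ) ∣ 8) (ZMod 2)) ((L : ZMod 8)) = 1 := by
    rw [← cast28]; exact odd_cast2 hLo
  have e2M : (ZMod.castHom (by norm_num : (2:ℕ) ∣ 8) (ZMod 2)) ((M : ZMod 8)) = 0 := by
    rw [← cast28]; exact even_cast2 hMe
  have hdec := final_decide (A : ZMod 8) (a1 : ZMod 8) (a2 : ZMod 8) (L : ZMod 8) (M : ZMod 8)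
    e2A e2a1 e2L e2M
  -- RHS translations
  have hii : (2 * f.coeff 2 ≡ oddCoeffSum f [ZMOD 4]) ↔
      ((ZMod.castHom (by norm_num : (4:ℕ) ∣ 8) (ZMod 4)) (2 * (a2 : ZMod 8))
        = (ZMod.castHom (by norm_num : (4:ℕ) ∣ 8) (ZMod 4)) ((L : ZMod 8) - a1)) := by
    have hO : oddCoeffSum f = L - a1 := by rw [hL, ha1]; ring
    rw [hO, ← ha2, show ((4:ℤ)) = ((4:ℕ):ℤ) from by norm_num, modeq_iff_zmod]
    rw [cast48 (2 * a2), cast48 (L - a1)]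
    push_cast
    rfl
  have hiii : (f.coeff 2 + f.coeff 1 - 1 ≡ evenCoeffSumFour f [ZMOD 4]) ↔
      ((ZMod.castHom (by norm_num : (4:ℕ) ∣ 8) (ZMod 4)) ((a2 : ZMod 8) + a1 - 1)
        = (ZMod.castHom (by norm_num : (4:ℕ) ∣ 8) (ZMod 4)) ((M : ZMod 8) - a2)) := by
    have hE : evenCoeffSumFour f = M - a2 := by rw [hM, ha2]; ring
    rw [hE, ← ha2, ← ha1, show ((4:ℤ)) = ((4:ℕ):ℤ) from by norm_num, modeq_iff_zmod]
    rw [cast48 (a2 + a1 - 1), cast48 (M - a2)]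
    push_cast
    rfl
  constructor
  · rintro ⟨h1, h2⟩
    have hb := hb24 h1
    have := hdec.mp ⟨hC1iff.mp h1, (hC2iff hb).mp h2⟩
    exact ⟨hii.mpr this.1, hiii.mpr this.2⟩
  · rintro ⟨h1, h2⟩
    have := hdec.mpr ⟨hii.mp h1, hiii.mp h2⟩
    have hc1 : Crit f 1 := hC1iff.mpr this.1
    have hb := hb24 hc1
    exact ⟨hc1, (hC2iff hb).mpr this.2⟩
end Final

/-- Main theorem: a `2`-permutational polynomial `f = a₀ + a₁ X + ⋯ + a_t X^t` is transitive
mod `2 ^ n` for every `n ≥ 1` (i.e. acts level transitively on the binary tree) if and only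
if `a₀ ≡ 1 (mod 2)`, `2 a₂ ≡ a₃ + a₅ + ⋯ (mod 4)`, and `a₂ + a₁ - 1 ≡ a₄ + a₆ + ⋯ (mod 4)`. -/
theorem level_transitive_iff (f : ℤ[X]) (hf : Permutational2 f) :
    (∀ n : ℕ, 1 ≤ n → TransitiveMod f (2 ^ n)) ↔
      (f.coeff 0 ≡ 1 [ZMOD 2] ∧
       2 * f.coeff 2 ≡ oddCoeffSum f [ZMOD 4] ∧
       f.coeff 2 + f.coeff 1 - 1 ≡ evenCoeffSumFour f [ZMOD 4]) := by
  rw [T_iff_S f hf, allSorb_iff_allCrit f hf, allCrit_iff f hf]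
  have hoddiff : (f.coeff 0 ≡ 1 [ZMOD 2]) → Odd (f.coeff 0) := by
    intro h
    obtain ⟨c, hc⟩ := Int.ModEq.dvd h
    exact ⟨-c, by omega⟩
  constructor
  · rintro ⟨h0, h1, h2⟩
    have h0' := (crit0_iff f).mp h0
    have h12 := (crit_iff_coeffs f hf (hoddiff h0')).mp ⟨h1, h2⟩
    exact ⟨h0', h12.1, h12.2⟩
  · rintro ⟨h0, h1, h2⟩
    have h12 := (crit_iff_coeffs f hf (hoddiff h0)).mpr ⟨h1, h2⟩
    exact ⟨(crit0_iff f).mpr h0, h12.1, h12.2⟩
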